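/- In the setup (G centerless, f, h : G → Aut(G) with h(σ) = conj(g(σ))∘f(σ), g a bijection satisfying g(στ) = g(σ)·f(σ)(g(τ)), and N = {ρ(g(σ))∘f(σ) : σ ∈ G} a normal subgroup of Hol(G)), if {f(σ)h(σ) : σ ∈ G} = Inn(G), then g(ker(f)) ⊆ ker(f) and g(ker(h)) ⊆ ker(h). -/

import Mathlib

/-- The left regular representation `λ : G →* Perm G`, `λ(σ)(x) = σ·x`. -/
def lambda (G : Type*) [Group G] : G →* Equiv.Perm G where
  toFun σ := Equiv.mulLeft σ
  map_one' := by ext x; simp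
  map_mul' σ τ := by ext x; simp [mul_assoc]

/-- The right regular representation `ρ : G →* Perm G`, `ρ(σ)(x) = x·σ⁻¹`. -/
def rho (G : Type*) [Group G] : G →* Equiv.Perm G where
  toFun σ := Equiv.mulRight σ⁻¹
  map_one' := by ext x; simp
  map_mul' σ τ := by ext x; simp [mul_assoc]

/-- The holomorph `Hol(G)`: the normalizer of `λ(G)` in `Perm G`. -/
def Hol (G : Type*) [Group G] : Subgroup (Equiv.Perm G) :=
  Subgroup.normalizer (((lambda G).range : Subgroup (Equiv.Perm G)) : Set (Equiv.Perm G))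

set_option maxHeartbeats 1600000 in
/-- In the setup, if `{f(σ)h(σ) : σ ∈ G} = Inn(G)`, then
`g(ker f) ⊆ ker f` and `g(ker h) ⊆ ker h`. -/
theorem g_preserves_kernels_of_fh_eq_inn
    (G : Type*) [Group G] (hZ : Subgroup.center G = ⊥)
    (f h : G →* MulAut G) (g : Equiv.Perm G) (hg1 : g 1 = 1)
    (hrel : ∀ σ τ : G, g (σ * τ) = g σ * (f σ) (g τ))
    (hh : ∀ σ : G, h σ = MulAut.conj (g σ) * f σ)
    (N : Subgroup (Equiv.Perm G))
    (hN : (N : Set (Equiv.Perm G))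
      = {q | ∃ σ : G, q = rho G (g σ) * MulAut.toPerm G (f σ)})
    (hNle : N ≤ Hol G)
    (hNnorm : ∀ x ∈ Hol G, ∀ n ∈ N, x * n * x⁻¹ ∈ N)
    (hfh : Set.range (fun σ : G => f σ * h σ)
      = ((MulAut.conj : G →* MulAut G).range : Set (MulAut G)))
    :
    ⇑g '' (f.ker : Set G) ⊆ (f.ker : Set G) ∧
      ⇑g '' (h.ker : Set G) ⊆ (h.ker : Set G) := by
  classical
  -- conj is injective since the center is trivial
  have conj_inj : ∀ a b : G, MulAut.conj a = MulAut.conj b → a = b := by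
    intro a b hab
    have hc : ∀ v : G, a * v * a⁻¹ = b * v * b⁻¹ := by
      intro v
      simpa [MulAut.conj_apply] using DFunLike.congr_fun hab v
    have hcen : b⁻¹ * a ∈ Subgroup.center G := by
      rw [Subgroup.mem_center_iff]
      intro v
      calc v * (b⁻¹ * a) = b⁻¹ * (b * v * b⁻¹) * a := by group
        _ = b⁻¹ * (a * v * a⁻¹) * a := by rw [hc v]
        _ = (b⁻¹ * a) * v := by group
    rw [hZ, Subgroup.mem_bot] at hcen
    exact (inv_mul_eq_one.mp hcen).symm
  -- basic facts about g
  have hginv : ∀ σ : G, f σ (g σ⁻¹) = (g σ)⁻¹ := by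
    intro σ
    have h0 := hrel σ σ⁻¹
    rw [mul_inv_cancel, hg1] at h0
    exact (inv_eq_of_mul_eq_one_right h0.symm).symm
  have g_div : ∀ σ τ : G, g (σ⁻¹ * τ) = (f σ)⁻¹ ((g σ)⁻¹ * g τ) := by
    intro σ τ
    apply (f σ).injective
    rw [MulAut.apply_inv_self]
    have h0 := hrel σ (σ⁻¹ * τ)
    rw [mul_inv_cancel_left] at h0
    rw [h0]
    group
  have h_apply : ∀ σ v : G, h σ v = g σ * f σ v * (g σ)⁻¹ := by
    intro σ v
    rw [hh σ]
    simp [MulAut.mul_apply, MulAut.conj_apply]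
  have conj_nat : ∀ (φ : MulAut G) (d : G),
      MulAut.conj (φ d) = φ * MulAut.conj d * φ⁻¹ := by
    intro φ d
    apply DFunLike.ext
    intro x
    simp [MulAut.mul_apply, MulAut.conj_apply, map_mul, map_inv]
  -- membership in the holomorph
  have hol_of_conj : ∀ q : Equiv.Perm G,
      (∀ a, ∃ b, q * lambda G a * q⁻¹ = lambda G b) →
      (∀ a, ∃ b, q⁻¹ * lambda G a * q = lambda G b) → q ∈ Hol G := by
    intro q H1 H2
    rw [Hol, Subgroup.mem_normalizer_iff]
    intro p
    constructor
    · rintro ⟨a, rfl⟩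
      obtain ⟨b, hb⟩ := H1 a
      exact ⟨b, hb.symm⟩
    · rintro ⟨a, ha⟩
      obtain ⟨b, hb⟩ := H2 a
      refine ⟨b, ?_⟩
      rw [← hb, ha]
      group
  have rho_hol : ∀ v : G, rho G v ∈ Hol G := by
    intro v
    refine hol_of_conj _ (fun a => ⟨a, ?_⟩) (fun a => ⟨a, ?_⟩) <;>
      · ext x
        simp [Equiv.Perm.mul_apply, Equiv.Perm.inv_def, rho, lambda, mul_assoc]
  have lam_hol : ∀ v : G, lambda G v ∈ Hol G := by
    intro v
    refine hol_of_conj _ (fun a => ⟨v * a * v⁻¹, ?_⟩) (fun a => ⟨v⁻¹ * a * v, ?_⟩) <;>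
      · ext x
        simp [Equiv.Perm.mul_apply, Equiv.Perm.inv_def, rho, lambda, mul_assoc]
  have toPerm_apply' : ∀ (φ : MulAut G) (x : G), MulAut.toPerm G φ x = φ x :=
    fun _ _ => rfl
  have toPerm_symm_apply' : ∀ (φ : MulAut G) (x : G),
      (MulAut.toPerm G φ).symm x = φ.symm x := fun _ _ => rfl
  have aut_hol : ∀ φ : MulAut G, MulAut.toPerm G φ ∈ Hol G := by
    intro φ
    refine hol_of_conj _ (fun a => ⟨φ a, ?_⟩) (fun a => ⟨φ⁻¹ a, ?_⟩) <;>
      · ext x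
        simp [Equiv.Perm.mul_apply, Equiv.Perm.inv_def, MulAut.inv_def, lambda,
          toPerm_apply', toPerm_symm_apply', mul_assoc]
  have n_mem : ∀ σ : G, rho G (g σ) * MulAut.toPerm G (f σ) ∈ N := by
    intro σ
    have : rho G (g σ) * MulAut.toPerm G (f σ) ∈ (N : Set (Equiv.Perm G)) := by
      rw [hN]; exact ⟨σ, rfl⟩
    exact this
  have nform_inj : ∀ (a b : G) (α β : MulAut G),
      rho G a * MulAut.toPerm G α = rho G b * MulAut.toPerm G β → a = b ∧ α = β := by
    intro a b α β hEq
    have h1 : ∀ x, α x * a⁻¹ = β x * b⁻¹ := by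
      intro x
      have h2 := DFunLike.congr_fun hEq x
      simpa [Equiv.Perm.mul_apply, rho, toPerm_apply', toPerm_symm_apply'] using h2
    have hab : a = b := by
      have h3 := h1 1
      simp only [map_one] at h3
      simpa using inv_injective (by simpa using h3)
    subst hab
    exact ⟨rfl, DFunLike.ext _ _ fun x => mul_right_cancel (h1 x)⟩
  -- the three conjugation facts coming from normality of N in Hol G
  have C_rho : ∀ σ v : G, ∃ σ' : G, f σ' = f σ ∧ g σ' = v * g σ * (f σ v)⁻¹ := by
    intro σ v
    have hmem : rho G v * (rho G (g σ) * MulAut.toPerm G (f σ)) * (rho G v)⁻¹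
        ∈ (N : Set (Equiv.Perm G)) := hNnorm _ (rho_hol v) _ (n_mem σ)
    rw [hN] at hmem
    obtain ⟨σ', hq⟩ := hmem
    have hE : rho G v * (rho G (g σ) * MulAut.toPerm G (f σ)) * (rho G v)⁻¹
        = rho G (v * g σ * (f σ v)⁻¹) * MulAut.toPerm G (f σ) := by
      ext x
      simp [Equiv.Perm.mul_apply, Equiv.Perm.inv_def, rho, toPerm_apply', toPerm_symm_apply', map_mul, mul_assoc]
    rw [hE] at hq
    obtain ⟨h1, h2⟩ := nform_inj _ _ _ _ hq.symm
    exact ⟨σ', h2, h1⟩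
  have C_lam : ∀ σ v : G, ∃ σ' : G,
      f σ' = MulAut.conj (v * (f σ v)⁻¹) * f σ ∧ g σ' = g σ * f σ v * v⁻¹ := by
    intro σ v
    have hmem : lambda G v * (rho G (g σ) * MulAut.toPerm G (f σ)) * (lambda G v)⁻¹
        ∈ (N : Set (Equiv.Perm G)) := hNnorm _ (lam_hol v) _ (n_mem σ)
    rw [hN] at hmem
    obtain ⟨σ', hq⟩ := hmem
    have hE : lambda G v * (rho G (g σ) * MulAut.toPerm G (f σ)) * (lambda G v)⁻¹
        = rho G (g σ * f σ v * v⁻¹) * MulAut.toPerm G (MulAut.conj (v * (f σ v)⁻¹) * f σ) := by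
      ext x
      simp [Equiv.Perm.mul_apply, Equiv.Perm.inv_def, rho, lambda, toPerm_apply', toPerm_symm_apply',
        MulAut.conj_apply, map_mul, map_inv, mul_assoc]
    rw [hE] at hq
    obtain ⟨h1, h2⟩ := nform_inj _ _ _ _ hq.symm
    exact ⟨σ', h2, h1⟩
  have C_aut : ∀ (φ : MulAut G) (σ : G), ∃ σ' : G,
      f σ' = φ * f σ * φ⁻¹ ∧ g σ' = φ (g σ) := by
    intro φ σ
    have hmem : MulAut.toPerm G φ * (rho G (g σ) * MulAut.toPerm G (f σ))
        * (MulAut.toPerm G φ)⁻¹ ∈ (N : Set (Equiv.Perm G)) :=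
      hNnorm _ (aut_hol φ) _ (n_mem σ)
    rw [hN] at hmem
    obtain ⟨σ', hq⟩ := hmem
    have hE : MulAut.toPerm G φ * (rho G (g σ) * MulAut.toPerm G (f σ))
        * (MulAut.toPerm G φ)⁻¹
        = rho G (φ (g σ)) * MulAut.toPerm G (φ * f σ * φ⁻¹) := by
      ext x
      simp [Equiv.Perm.mul_apply, Equiv.Perm.inv_def, rho, toPerm_apply', toPerm_symm_apply', map_mul,
        map_inv, mul_assoc]
    rw [hE] at hq
    obtain ⟨h1, h2⟩ := nform_inj _ _ _ _ hq.symm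
    exact ⟨σ', h2, h1⟩
  -- the sets K = g(ker f) and L = g(ker h), described by explicit predicates
  -- K-closure lemmas
  have K_inv : ∀ x : G, (∃ α, f α = 1 ∧ g α = x) → ∃ α, f α = 1 ∧ g α = x⁻¹ := by
    rintro x ⟨α, h1, rfl⟩
    refine ⟨α⁻¹, by rw [map_inv, h1, inv_one], ?_⟩
    have h2 := hginv α
    rw [h1, MulAut.one_apply] at h2
    exact h2
  have K_mul : ∀ x y : G, (∃ α, f α = 1 ∧ g α = x) → (∃ α, f α = 1 ∧ g α = y) →
      ∃ α, f α = 1 ∧ g α = x * y := by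
    rintro x y ⟨α, h1, rfl⟩ ⟨β, h3, rfl⟩
    refine ⟨α * β, by rw [map_mul, h1, h3, one_mul], ?_⟩
    rw [hrel α β, h1, MulAut.one_apply]
  have L_inv : ∀ x : G, (∃ β, h β = 1 ∧ g β = x) → ∃ β, h β = 1 ∧ g β = x⁻¹ := by
    rintro x ⟨β, h1, rfl⟩
    refine ⟨β⁻¹, by rw [map_inv, h1, inv_one], ?_⟩
    have hf : f β = (MulAut.conj (g β))⁻¹ := by
      have h0 : MulAut.conj (g β) * f β = 1 := by rw [← hh β, h1]
      calc f β = (MulAut.conj (g β))⁻¹ * (MulAut.conj (g β) * f β) := by group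
        _ = (MulAut.conj (g β))⁻¹ := by rw [h0, mul_one]
    have h3 := hginv β
    rw [hf] at h3
    have h4 := congrArg (MulAut.conj (g β)) h3
    rw [MulAut.apply_inv_self] at h4
    rw [h4, MulAut.conj_apply]
    group
  have L_mul : ∀ x y : G, (∃ β, h β = 1 ∧ g β = x) → (∃ β, h β = 1 ∧ g β = y) →
      ∃ β, h β = 1 ∧ g β = x * y := by
    rintro x y ⟨α, h1, rfl⟩ ⟨β, h3, rfl⟩
    refine ⟨β * α, by rw [map_mul, h1, h3, one_mul], ?_⟩
    have hf : f β = (MulAut.conj (g β))⁻¹ := by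
      have h0 : MulAut.conj (g β) * f β = 1 := by rw [← hh β, h3]
      calc f β = (MulAut.conj (g β))⁻¹ * (MulAut.conj (g β) * f β) := by group
        _ = (MulAut.conj (g β))⁻¹ := by rw [h0, mul_one]
    rw [hrel β α, hf]
    have h5 : (MulAut.conj (g β))⁻¹ (g α) = (g β)⁻¹ * g α * g β := by
      have := MulAut.conj_symm_apply (g β) (g α)
      rw [← MulAut.inv_def] at this
      exact this
    rw [h5]
    group
  -- K ∩ L = 1
  have KL_triv : ∀ x : G, (∃ α, f α = 1 ∧ g α = x) → (∃ β, h β = 1 ∧ g β = x) →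
      x = 1 := by
    rintro x ⟨α, h1, rfl⟩ ⟨β, h3, h4⟩
    have hab : β = α := g.injective h4
    subst hab
    have h5 : MulAut.conj (g β) = 1 := by
      have := hh β
      rw [h1, h3, mul_one] at this
      exact this.symm
    have : g β = 1 := conj_inj _ _ (by rw [h5, map_one])
    exact this
  -- K and L are stable under all automorphisms
  have K_aut : ∀ (φ : MulAut G) (x : G), (∃ α, f α = 1 ∧ g α = x) →
      ∃ α, f α = 1 ∧ g α = φ x := by
    rintro φ x ⟨α, h1, rfl⟩
    obtain ⟨σ', h2, h3⟩ := C_aut φ α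
    exact ⟨σ', by rw [h2, h1]; group, h3⟩
  have L_aut : ∀ (φ : MulAut G) (x : G), (∃ β, h β = 1 ∧ g β = x) →
      ∃ β, h β = 1 ∧ g β = φ x := by
    rintro φ x ⟨β, h1, rfl⟩
    obtain ⟨σ', h2, h3⟩ := C_aut φ β
    refine ⟨σ', ?_, h3⟩
    have h4 : h σ' = φ * (MulAut.conj (g β) * f β) * φ⁻¹ := by
      rw [hh σ', h2, h3, conj_nat]
      group
    rw [← hh β, h1] at h4
    rw [h4]
    group
  have K_conj : ∀ (u x : G), (∃ α, f α = 1 ∧ g α = x) →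
      ∃ α, f α = 1 ∧ g α = u * x * u⁻¹ := by
    intro u x hx
    have := K_aut (MulAut.conj u) x hx
    simpa [MulAut.conj_apply] using this
  have L_conj : ∀ (u x : G), (∃ β, h β = 1 ∧ g β = x) →
      ∃ β, h β = 1 ∧ g β = u * x * u⁻¹ := by
    intro u x hx
    have := L_aut (MulAut.conj u) x hx
    simpa [MulAut.conj_apply] using this
  -- the h-twists lie in K
  have N2 : ∀ σ v : G, ∃ α, f α = 1 ∧ g α = h σ v * v⁻¹ := by
    intro σ v
    obtain ⟨σ', h1, h2⟩ := C_rho σ v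
    have hf : f (σ' * σ⁻¹) = 1 := by rw [map_mul, map_inv, h1]; group
    have hg' : g (σ' * σ⁻¹) = v * g σ * (f σ v)⁻¹ * (g σ)⁻¹ := by
      rw [hrel σ' σ⁻¹, h1, hginv σ, h2]
    have hx : h σ v * v⁻¹ = (v * g σ * (f σ v)⁻¹ * (g σ)⁻¹)⁻¹ := by
      rw [h_apply]; group
    rw [hx]
    exact K_inv _ ⟨σ' * σ⁻¹, hf, hg'⟩
  -- the f-twists lie in L
  have R_lam : ∀ σ v : G, ∃ β, h β = 1 ∧ g β = v * ((f σ)⁻¹ v)⁻¹ := by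
    intro σ v
    obtain ⟨σ', h1, h2⟩ := C_lam σ v
    have hgδ : g (σ⁻¹ * σ') = v * ((f σ)⁻¹ v)⁻¹ := by
      rw [g_div, h2]
      have e : (g σ)⁻¹ * (g σ * f σ v * v⁻¹) = f σ v * v⁻¹ := by group
      rw [e, map_mul, map_inv ((f σ)⁻¹) v, MulAut.inv_apply_self]
    have hfδ : f (σ⁻¹ * σ') = MulAut.conj ((f σ)⁻¹ v * v⁻¹) := by
      rw [map_mul, map_inv f σ, h1]
      have hcn := conj_nat ((f σ)⁻¹) (v * (f σ v)⁻¹)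
      rw [inv_inv] at hcn
      have h3 : (f σ)⁻¹ (v * (f σ v)⁻¹) = (f σ)⁻¹ v * v⁻¹ := by
        rw [map_mul, map_inv ((f σ)⁻¹) (f σ v), MulAut.inv_apply_self]
      rw [h3] at hcn
      calc (f σ)⁻¹ * (MulAut.conj (v * (f σ v)⁻¹) * f σ)
          = (f σ)⁻¹ * MulAut.conj (v * (f σ v)⁻¹) * f σ := by group
        _ = MulAut.conj ((f σ)⁻¹ v * v⁻¹) := hcn.symm
    refine ⟨σ⁻¹ * σ', ?_, hgδ⟩
    rw [hh (σ⁻¹ * σ'), hfδ, hgδ]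
    have h6 : v * ((f σ)⁻¹ v)⁻¹ = ((f σ)⁻¹ v * v⁻¹)⁻¹ := by group
    rw [h6, map_inv MulAut.conj ((f σ)⁻¹ v * v⁻¹)]
    group
  have N1 : ∀ σ v : G, ∃ β, h β = 1 ∧ g β = f σ v * v⁻¹ := by
    intro σ v
    have h0 := R_lam σ⁻¹ v
    rw [map_inv f σ, inv_inv] at h0
    have h1 := L_inv _ h0
    have h2 : (v * (f σ v)⁻¹)⁻¹ = f σ v * v⁻¹ := by group
    rw [h2] at h1
    exact h1
  -- f fixes K pointwise, h fixes L pointwise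
  have f_fix_K : ∀ (σ x : G), (∃ α, f α = 1 ∧ g α = x) → f σ x = x := by
    intro σ x hx
    have hL : ∃ β, h β = 1 ∧ g β = f σ x * x⁻¹ := N1 σ x
    have hK : ∃ α, f α = 1 ∧ g α = f σ x * x⁻¹ :=
      K_mul _ _ (K_aut (f σ) x hx) (K_inv _ hx)
    exact mul_inv_eq_one.mp (KL_triv _ hK hL)
  have h_fix_L : ∀ (σ x : G), (∃ β, h β = 1 ∧ g β = x) → h σ x = x := by
    intro σ x hx
    have hK : ∃ α, f α = 1 ∧ g α = h σ x * x⁻¹ := N2 σ x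
    have hL : ∃ β, h β = 1 ∧ g β = h σ x * x⁻¹ :=
      L_mul _ _ (L_aut (h σ) x hx) (L_inv _ hx)
    exact mul_inv_eq_one.mp (KL_triv _ hK hL)
  -- elements of K commute with elements of L
  have KL_comm : ∀ k l : G, (∃ α, f α = 1 ∧ g α = k) → (∃ β, h β = 1 ∧ g β = l) →
      k * l = l * k := by
    intro k l hk hl
    have hKc : ∃ α, f α = 1 ∧ g α = k * l * k⁻¹ * l⁻¹ := by
      have e : k * l * k⁻¹ * l⁻¹ = k * (l * k⁻¹ * l⁻¹) := by group
      rw [e]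
      exact K_mul _ _ hk (K_conj l _ (K_inv _ hk))
    have hLc : ∃ β, h β = 1 ∧ g β = k * l * k⁻¹ * l⁻¹ :=
      L_mul _ _ (L_conj k _ hl) (L_inv _ hl)
    have h0 := KL_triv _ hKc hLc
    calc k * l = (k * l * k⁻¹ * l⁻¹) * (l * k) := by group
      _ = l * k := by rw [h0, one_mul]
  -- definition of t via the hypothesis hfh
  have hex : ∀ σ : G, ∃ π : G, MulAut.conj π = f σ * h σ := by
    intro σ
    have hmem : f σ * h σ ∈ Set.range (fun σ : G => f σ * h σ) := ⟨σ, rfl⟩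
    rw [hfh] at hmem
    exact MonoidHom.mem_range.mp hmem
  choose t ht using hex
  have t_surj : ∀ π : G, ∃ σ, t σ = π := by
    intro π
    have hmem : MulAut.conj π
        ∈ ((MulAut.conj : G →* MulAut G).range : Set (MulAut G)) :=
      ⟨π, rfl⟩
    rw [← hfh] at hmem
    obtain ⟨σ, hσ⟩ := hmem
    exact ⟨σ, conj_inj _ _ ((ht σ).trans hσ)⟩
  -- images of f and h commute
  have f_h_comm : ∀ σ τ : G, f σ * h τ = h τ * f σ := by
    intro σ τ
    apply DFunLike.ext
    intro v
    rw [MulAut.mul_apply, MulAut.mul_apply]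
    have hk : ∃ α, f α = 1 ∧ g α = h τ v * v⁻¹ := N2 τ v
    have hl : ∃ β, h β = 1 ∧ g β = f σ v * v⁻¹ := N1 σ v
    have hc := KL_comm _ _ hk hl
    have e1 : f σ (h τ v) = (h τ v * v⁻¹) * f σ v := by
      calc f σ (h τ v) = f σ ((h τ v * v⁻¹) * v) := by rw [inv_mul_cancel_right]
        _ = f σ (h τ v * v⁻¹) * f σ v := map_mul _ _ _
        _ = (h τ v * v⁻¹) * f σ v := by rw [f_fix_K σ _ hk]
    have e2 : h τ (f σ v) = (f σ v * v⁻¹) * h τ v := by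
      calc h τ (f σ v) = h τ ((f σ v * v⁻¹) * v) := by rw [inv_mul_cancel_right]
        _ = h τ (f σ v * v⁻¹) * h τ v := map_mul _ _ _
        _ = (f σ v * v⁻¹) * h τ v := by rw [h_fix_L τ _ hl]
    rw [e1, e2]
    calc (h τ v * v⁻¹) * f σ v
        = ((h τ v * v⁻¹) * (f σ v * v⁻¹)) * v := by group
      _ = ((f σ v * v⁻¹) * (h τ v * v⁻¹)) * v := by rw [hc]
      _ = (f σ v * v⁻¹) * h τ v := by group
  -- t is a homomorphism
  have t_hom : ∀ σ τ : G, t (σ * τ) = t σ * t τ := by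
    intro σ τ
    apply conj_inj
    rw [map_mul, ht, ht, ht, map_mul, map_mul]
    calc f σ * f τ * (h σ * h τ) = f σ * (f τ * h σ) * h τ := by group
      _ = f σ * (h σ * f τ) * h τ := by rw [f_h_comm]
      _ = f σ * h σ * (f τ * h τ) := by group
  have t_ker : ∀ σ : G, t σ = 1 → σ = 1 := by
    intro σ h0
    have h1 : f σ * h σ = 1 := by rw [← ht σ, h0, map_one]
    have h2 : h σ = (f σ)⁻¹ := by
      calc h σ = (f σ)⁻¹ * (f σ * h σ) := by group
        _ = (f σ)⁻¹ := by rw [h1, mul_one]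
    have hfix : ∀ w, f σ w = w := by
      intro w
      have hKa : ∃ α, f α = 1 ∧ g α = h σ (f σ w) * (f σ w)⁻¹ := N2 σ (f σ w)
      have h3 : h σ (f σ w) = w := by rw [h2, MulAut.inv_apply_self]
      rw [h3] at hKa
      have hKb := K_inv _ hKa
      have e : (w * (f σ w)⁻¹)⁻¹ = f σ w * w⁻¹ := by group
      rw [e] at hKb
      exact mul_inv_eq_one.mp (KL_triv _ hKb (N1 σ w))
    have hf1 : f σ = 1 := DFunLike.ext _ _ fun w => by
      rw [hfix w, MulAut.one_apply]
    have hh1 : MulAut.conj (g σ) = 1 := by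
      have h4 := hh σ
      rw [h2, hf1, inv_one, mul_one] at h4
      exact h4.symm
    have h5 : g σ = 1 := conj_inj _ _ (by rw [hh1, map_one])
    apply g.injective
    rw [h5, hg1]
  -- t is an automorphism
  let tm : G →* G := MonoidHom.mk' t t_hom
  have t_injm : Function.Injective tm := by
    intro a b hab
    have h0 : tm (a⁻¹ * b) = 1 := by
      rw [map_mul, map_inv, hab]
      group
    have h1 : a⁻¹ * b = 1 := t_ker _ h0
    exact inv_mul_eq_one.mp h1
  have t_surjm : Function.Surjective tm := t_surj
  let tA : MulAut G := MulEquiv.ofBijective tm ⟨t_injm, t_surjm⟩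
  have tA_apply : ∀ x, tA x = t x := fun _ => rfl
  -- the preimage of the centre of G/K is K, and similarly for L
  have W_sub_K : ∀ π : G, (∀ v, ∃ α, f α = 1 ∧ g α = π * v * π⁻¹ * v⁻¹) →
      ∃ α, f α = 1 ∧ g α = π := by
    intro π hyp
    obtain ⟨σ, hσ⟩ := t_surj π
    have hfix : ∀ v, f σ v = v := by
      intro v
      have hcomm : π * v * π⁻¹ = f σ (h σ v) := by
        have h0 := DFunLike.congr_fun (ht σ) v
        rw [hσ] at h0
        simpa [MulAut.conj_apply, MulAut.mul_apply] using h0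
      have hk : ∃ α, f α = 1 ∧ g α = h σ v * v⁻¹ := N2 σ v
      have e0 : f σ (h σ v) = (h σ v * v⁻¹) * f σ v := by
        calc f σ (h σ v) = f σ ((h σ v * v⁻¹) * v) := by rw [inv_mul_cancel_right]
          _ = f σ (h σ v * v⁻¹) * f σ v := map_mul _ _ _
          _ = (h σ v * v⁻¹) * f σ v := by rw [f_fix_K σ _ hk]
      have e1 : π * v * π⁻¹ * v⁻¹ = (h σ v * v⁻¹) * (f σ v * v⁻¹) := by
        rw [hcomm, e0]
        group
      have hKtot := hyp v
      rw [e1] at hKtot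
      have e2 : f σ v * v⁻¹
          = (h σ v * v⁻¹)⁻¹ * ((h σ v * v⁻¹) * (f σ v * v⁻¹)) := by group
      have hKl : ∃ α, f α = 1 ∧ g α = f σ v * v⁻¹ := by
        rw [e2]
        exact K_mul _ _ (K_inv _ hk) hKtot
      exact mul_inv_eq_one.mp (KL_triv _ hKl (N1 σ v))
    have hf1 : f σ = 1 := DFunLike.ext _ _ fun w => by
      rw [hfix w, MulAut.one_apply]
    have hcc : MulAut.conj π = MulAut.conj (g σ) := by
      rw [← hσ, ht σ, hf1, one_mul, hh σ, hf1, mul_one]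
    exact ⟨σ, hf1, (conj_inj _ _ hcc).symm⟩
  have W_sub_L : ∀ π : G, (∀ v, ∃ β, h β = 1 ∧ g β = π * v * π⁻¹ * v⁻¹) →
      ∃ β, h β = 1 ∧ g β = π := by
    intro π hyp
    obtain ⟨σ, hσ⟩ := t_surj π
    have hfix : ∀ v, h σ v = v := by
      intro v
      have hcomm : π * v * π⁻¹ = f σ (h σ v) := by
        have h0 := DFunLike.congr_fun (ht σ) v
        rw [hσ] at h0
        simpa [MulAut.conj_apply, MulAut.mul_apply] using h0
      have hk : ∃ α, f α = 1 ∧ g α = h σ v * v⁻¹ := N2 σ v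
      have e0 : f σ (h σ v) = (h σ v * v⁻¹) * f σ v := by
        calc f σ (h σ v) = f σ ((h σ v * v⁻¹) * v) := by rw [inv_mul_cancel_right]
          _ = f σ (h σ v * v⁻¹) * f σ v := map_mul _ _ _
          _ = (h σ v * v⁻¹) * f σ v := by rw [f_fix_K σ _ hk]
      have e1 : π * v * π⁻¹ * v⁻¹ = (h σ v * v⁻¹) * (f σ v * v⁻¹) := by
        rw [hcomm, e0]
        group
      have hLtot := hyp v
      rw [e1] at hLtot
      have e2 : h σ v * v⁻¹
          = ((h σ v * v⁻¹) * (f σ v * v⁻¹)) * (f σ v * v⁻¹)⁻¹ := by group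
      have hLk : ∃ β, h β = 1 ∧ g β = h σ v * v⁻¹ := by
        rw [e2]
        exact L_mul _ _ hLtot (L_inv _ (N1 σ v))
      exact mul_inv_eq_one.mp (KL_triv _ hk hLk)
    have hh1 : h σ = 1 := DFunLike.ext _ _ fun w => by
      rw [hfix w, MulAut.one_apply]
    have hfc : f σ = (MulAut.conj (g σ))⁻¹ := by
      have h0 : MulAut.conj (g σ) * f σ = 1 := by rw [← hh σ, hh1]
      calc f σ = (MulAut.conj (g σ))⁻¹ * (MulAut.conj (g σ) * f σ) := by group
        _ = (MulAut.conj (g σ))⁻¹ := by rw [h0, mul_one]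
    have hcc : MulAut.conj π = MulAut.conj ((g σ)⁻¹) := by
      rw [← hσ, ht σ, hh1, mul_one, hfc, map_inv]
    have hπ : π = (g σ)⁻¹ := conj_inj _ _ hcc
    rw [hπ]
    exact L_inv _ ⟨σ, hh1, rfl⟩
  -- the two key facts : g σ * t σ ∈ K and g σ * (t σ)⁻¹ ∈ L
  have hconjgs : ∀ σ : G, MulAut.conj (g σ) = h σ * (f σ)⁻¹ := by
    intro σ
    rw [hh σ]
    group
  have G10a : ∀ σ : G, ∃ α, f α = 1 ∧ g α = g σ * t σ := by
    intro σ
    apply W_sub_K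
    intro v
    have hcπ : MulAut.conj (g σ * t σ) = h σ * h σ := by
      rw [map_mul, hconjgs σ, ht σ]
      group
    have happ : (g σ * t σ) * v * (g σ * t σ)⁻¹ = h σ (h σ v) := by
      have h0 := DFunLike.congr_fun hcπ v
      rw [MulAut.conj_apply, MulAut.mul_apply] at h0
      exact h0
    have e : (g σ * t σ) * v * (g σ * t σ)⁻¹ * v⁻¹
        = (h σ (h σ v) * (h σ v)⁻¹) * (h σ v * v⁻¹) := by
      rw [happ]
      group
    rw [e]
    exact K_mul _ _ (N2 σ (h σ v)) (N2 σ v)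
  have G10b : ∀ σ : G, ∃ β, h β = 1 ∧ g β = g σ * (t σ)⁻¹ := by
    intro σ
    apply W_sub_L
    intro v
    have hcm : (f σ)⁻¹ * (h σ)⁻¹ = (h σ)⁻¹ * (f σ)⁻¹ := by
      have h0 := congrArg (fun z : MulAut G => z⁻¹) (f_h_comm σ σ)
      simpa [mul_inv_rev] using h0.symm
    have hcπ : MulAut.conj (g σ * (t σ)⁻¹) = (f σ)⁻¹ * (f σ)⁻¹ := by
      rw [map_mul, map_inv, hconjgs σ, ht σ]
      calc h σ * (f σ)⁻¹ * (f σ * h σ)⁻¹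
          = h σ * ((f σ)⁻¹ * (h σ)⁻¹) * (f σ)⁻¹ := by group
        _ = h σ * ((h σ)⁻¹ * (f σ)⁻¹) * (f σ)⁻¹ := by rw [hcm]
        _ = (f σ)⁻¹ * (f σ)⁻¹ := by group
    have happ : (g σ * (t σ)⁻¹) * v * (g σ * (t σ)⁻¹)⁻¹ = (f σ)⁻¹ ((f σ)⁻¹ v) := by
      have h0 := DFunLike.congr_fun hcπ v
      rw [MulAut.conj_apply, MulAut.mul_apply] at h0
      exact h0
    have e : (g σ * (t σ)⁻¹) * v * (g σ * (t σ)⁻¹)⁻¹ * v⁻¹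
        = ((f σ)⁻¹ ((f σ)⁻¹ v) * ((f σ)⁻¹ v)⁻¹) * ((f σ)⁻¹ v * v⁻¹) := by
      rw [happ]
      group
    have N1inv : ∀ w, ∃ β, h β = 1 ∧ g β = (f σ)⁻¹ w * w⁻¹ := by
      intro w
      have := N1 σ⁻¹ w
      rwa [map_inv f σ] at this
    rw [e]
    exact L_mul _ _ (N1inv ((f σ)⁻¹ v)) (N1inv v)
  -- every element of K is in ker f
  have K_ker : ∀ x : G, (∃ α, f α = 1 ∧ g α = x) → f x = 1 := by
    intro x hKx
    have hKtx : ∃ α, f α = 1 ∧ g α = t x := by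
      have := K_aut tA x hKx
      rwa [tA_apply] at this
    have hKgx : ∃ α, f α = 1 ∧ g α = g x := by
      have e : g x = (g x * t x) * (t x)⁻¹ := by group
      rw [e]
      exact K_mul _ _ (G10a x) (K_inv _ hKtx)
    have hfix : ∀ v, f x v = v := by
      intro v
      have hL : ∃ β, h β = 1 ∧ g β = f x v * v⁻¹ := N1 x v
      have e3 : f x v = (g x)⁻¹ * h x v * g x := by
        rw [h_apply x v]
        group
      have e2 : f x v * v⁻¹
          = (g x)⁻¹ * ((h x v * v⁻¹) * (v * g x * v⁻¹)) := by
        rw [e3]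
        group
      have hK : ∃ α, f α = 1 ∧ g α = f x v * v⁻¹ := by
        rw [e2]
        exact K_mul _ _ (K_inv _ hKgx) (K_mul _ _ (N2 x v) (K_conj v _ hKgx))
      exact mul_inv_eq_one.mp (KL_triv _ hK hL)
    exact DFunLike.ext _ _ fun v => by rw [hfix v, MulAut.one_apply]
  -- every element of L is in ker h
  have L_ker : ∀ y : G, (∃ β, h β = 1 ∧ g β = y) → h y = 1 := by
    intro y hLy
    have hLty : ∃ β, h β = 1 ∧ g β = t y := by
      have := L_aut tA y hLy
      rwa [tA_apply] at this
    have hLgy : ∃ β, h β = 1 ∧ g β = g y := by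
      have e : g y = (g y * (t y)⁻¹) * t y := by group
      rw [e]
      exact L_mul _ _ (G10b y) hLty
    have hfix : ∀ v, h y v = v := by
      intro v
      have hK : ∃ α, f α = 1 ∧ g α = h y v * v⁻¹ := N2 y v
      have e2 : h y v * v⁻¹
          = (g y * (f y v * v⁻¹) * (g y)⁻¹) * (g y * (v * (g y)⁻¹ * v⁻¹)) := by
        rw [h_apply y v]
        group
      have hL : ∃ β, h β = 1 ∧ g β = h y v * v⁻¹ := by
        rw [e2]
        exact L_mul _ _ (L_conj (g y) _ (N1 y v))
          (L_mul _ _ hLgy (L_conj v _ (L_inv _ hLgy)))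
      exact mul_inv_eq_one.mp (KL_triv _ hK hL)
    exact DFunLike.ext _ _ fun v => by rw [hfix v, MulAut.one_apply]
  constructor
  · rintro x ⟨σ, hσ, rfl⟩
    have hfσ : f σ = 1 := by simpa [MonoidHom.mem_ker] using hσ
    have hres : f (g σ) = 1 := K_ker (g σ) ⟨σ, hfσ, rfl⟩
    simpa [MonoidHom.mem_ker] using hres
  · rintro y ⟨σ, hσ, rfl⟩
    have hhσ : h σ = 1 := by simpa [MonoidHom.mem_ker] using hσ
    have hres : h (g σ) = 1 := L_ker (g σ) ⟨σ, hhσ, rfl⟩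
    simpa [MonoidHom.mem_ker] using hres
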